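/- Let A : [0,∞) → [0,∞) be an aggregation function whose super-additive transformation A* is finite and strictly convex. Then the sub-additive transformation satisfies A_*(x) = c·x for all x ∈ [0,∞), where c = lim_{t→0⁺} A(t)/t. -/

import Mathlib

/-- If `A : [0,∞) → [0,∞)` is an aggregation function whose super-additive
transformation `A*` is finite and strictly convex, then the sub-additive transformation
satisfies `A_*(x) = c·x` with `c = lim_{t→0⁺} A t / t`. -/
theorem subTransform_linear_of_strictConvex_superTransform
    (A Astar : ℝ → ℝ)
    (hA0 : A 0 = 0) (hAnonneg : ∀ x, 0 ≤ x → 0 ≤ A x) (hmono : MonotoneOn A (Set.Ici 0))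
    (hstar : ∀ x, 0 ≤ x →
      IsLUB {s : ℝ | ∃ (k : ℕ) (c : Fin k → ℝ), 1 ≤ k ∧ (∀ j, 0 ≤ c j) ∧
        (∑ j, c j) ≤ x ∧ s = ∑ j, A (c j)} (Astar x))
    (hconv : StrictConvexOn ℝ (Set.Ici 0) Astar) :
    ∃ c : ℝ, Filter.Tendsto (fun t => A t / t) (nhdsWithin 0 (Set.Ioi 0)) (nhds c) ∧
      ∀ x, 0 ≤ x →
        IsGLB {s : ℝ | ∃ (k : ℕ) (d : Fin k → ℝ), 1 ≤ k ∧ (∀ i, 0 ≤ d i) ∧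
          x ≤ (∑ i, d i) ∧ s = ∑ i, A (d i)} (c * x) := by
  set S : ℝ → Set ℝ := fun x => {s : ℝ | ∃ (k : ℕ) (c : Fin k → ℝ), 1 ≤ k ∧ (∀ j, 0 ≤ c j) ∧
      (∑ j, c j) ≤ x ∧ s = ∑ j, A (c j)} with hS
  have hstar' : ∀ x, 0 ≤ x → IsLUB (S x) (Astar x) := hstar
  -- basic membership facts
  have hmem_single : ∀ t x : ℝ, 0 ≤ t → t ≤ x → A t ∈ S x := by
    intro t x ht htx
    exact ⟨1, fun _ => t, le_refl 1, fun _ => ht, by simpa using htx, by simp⟩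
  have hzero_mem : ∀ x : ℝ, 0 ≤ x → (0 : ℝ) ∈ S x := by
    intro x hx
    have := hmem_single 0 x le_rfl hx
    rwa [hA0] at this
  have hA_le : ∀ t, 0 ≤ t → A t ≤ Astar t := fun t ht =>
    (hstar' t ht).1 (hmem_single t t ht le_rfl)
  have hAstar_nonneg : ∀ x, 0 ≤ x → 0 ≤ Astar x := fun x hx =>
    (hstar' x hx).1 (hzero_mem x hx)
  have hAstar_mono : ∀ x y, 0 ≤ x → x ≤ y → Astar x ≤ Astar y := by
    intro x y hx hxy
    refine (hstar' x hx).mono (hstar' y (hx.trans hxy)) ?_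
    rintro s ⟨k, c, hk, hc, hsum, rfl⟩
    exact ⟨k, c, hk, hc, hsum.trans hxy, rfl⟩
  have hAstar0 : Astar 0 = 0 := by
    refine (hstar' 0 le_rfl).unique ⟨?_, fun b hb => hb (hzero_mem 0 le_rfl)⟩
    rintro s ⟨k, c, hk, hc, hsum, rfl⟩
    have hc0 : ∀ j, c j = 0 := by
      intro j
      refine le_antisymm ?_ (hc j)
      calc c j ≤ ∑ i, c i := Finset.single_le_sum (fun i _ => hc i) (Finset.mem_univ j)
        _ ≤ 0 := hsum
    simp [hc0, hA0]
  -- convexity ratio estimates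
  have hratio : ∀ s t : ℝ, 0 ≤ s → s ≤ t → 0 < t → Astar s ≤ (s / t) * Astar t := by
    intro s t hs hst ht
    have h1 : (0 : ℝ) ∈ Set.Ici (0 : ℝ) := Set.self_mem_Ici
    have h2 : t ∈ Set.Ici (0 : ℝ) := le_of_lt ht
    have ha : (0 : ℝ) ≤ 1 - s / t := by
      have : s / t ≤ 1 := (div_le_one ht).2 hst
      linarith
    have hb : (0 : ℝ) ≤ s / t := div_nonneg hs ht.le
    have := hconv.convexOn.2 h1 h2 ha hb (by ring)
    have heq : (1 - s / t) • (0 : ℝ) + (s / t) • t = s := by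
      rw [smul_zero, zero_add, smul_eq_mul, div_mul_cancel₀ s ht.ne']
    rw [heq] at this
    simpa [hAstar0, smul_eq_mul] using this
  have hsratio : ∀ s t : ℝ, 0 < s → s < t → Astar s < (s / t) * Astar t := by
    intro s t hs hst
    have ht : (0 : ℝ) < t := hs.trans hst
    have h1 : (0 : ℝ) ∈ Set.Ici (0 : ℝ) := Set.self_mem_Ici
    have h2 : t ∈ Set.Ici (0 : ℝ) := le_of_lt ht
    have ha : (0 : ℝ) < 1 - s / t := by
      have : s / t < 1 := (div_lt_one ht).2 hst
      linarith
    have hb : (0 : ℝ) < s / t := div_pos hs ht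
    have := hconv.2 h1 h2 (by positivity : t ≠ (0:ℝ)).symm ha hb (by ring)
    have heq : (1 - s / t) • (0 : ℝ) + (s / t) • t = s := by
      rw [smul_zero, zero_add, smul_eq_mul, div_mul_cancel₀ s ht.ne']
    rw [heq] at this
    simpa [hAstar0, smul_eq_mul] using this
  -- pair rearrangement via convexity
  have hpair : ∀ δ a b : ℝ, 0 < δ → δ ≤ a → δ ≤ b →
      Astar a + Astar b ≤ Astar δ + Astar (a + b - δ) := by
    intro δ a b hδ hδa hδb
    set u := a + b - δ with hu
    have hδu : δ ≤ u := by simp only [hu]; linarith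
    rcases eq_or_lt_of_le hδu with h | h
    · have hab : a = δ ∧ b = δ := by constructor <;> nlinarith
      rw [hab.1, hab.2]
      have : u = δ := h.symm
      rw [this]
    · set lam := (a - δ) / (u - δ) with hlam
      have hden : 0 < u - δ := by linarith
      have hlam0 : 0 ≤ lam := div_nonneg (by linarith) hden.le
      have hlam1 : lam ≤ 1 := by
        rw [hlam, div_le_one hden]
        simp only [hu]; linarith
      have hmemδ : δ ∈ Set.Ici (0 : ℝ) := hδ.le
      have hmemu : u ∈ Set.Ici (0 : ℝ) := by simp only [Set.mem_Ici]; linarith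
      have h1 := hconv.convexOn.2 hmemδ hmemu (by linarith : (0:ℝ) ≤ 1 - lam) hlam0 (by ring)
      have h2 := hconv.convexOn.2 hmemδ hmemu hlam0 (by linarith : (0:ℝ) ≤ 1 - lam) (by ring)
      have he1 : (1 - lam) • δ + lam • u = a := by
        simp only [smul_eq_mul, hlam]
        field_simp
        ring
      have he2 : lam • δ + (1 - lam) • u = b := by
        simp only [smul_eq_mul, hlam]
        field_simp
        ring
      rw [he1] at h1
      rw [he2] at h2
      simp only [smul_eq_mul] at h1 h2
      linarith
  -- strict superadditivity
  have hssup : ∀ δ x : ℝ, 0 < δ → δ < x → Astar δ + Astar (x - δ) < Astar x := by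
    intro δ x hδ hδx
    have hx : 0 < x := hδ.trans hδx
    have h1 := hsratio δ x hδ hδx
    have h2 := hsratio (x - δ) x (by linarith) (by linarith)
    have h3 : (δ / x) * Astar x + ((x - δ) / x) * Astar x = Astar x := by
      field_simp
      ring
    linarith
  -- small values of Astar near zero
  have hsmall : ∀ ε x : ℝ, 0 < ε → 0 < x → ∃ δ, 0 < δ ∧ δ < x ∧ Astar δ < ε := by
    intro ε x hε hx
    set δ := min (x / 2) (min 1 (ε / (Astar 1 + 1))) with hδdef
    have hA1 : 0 ≤ Astar 1 := hAstar_nonneg 1 zero_le_one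
    have hδpos : 0 < δ := by
      apply lt_min (by linarith)
      exact lt_min one_pos (div_pos hε (by linarith))
    refine ⟨δ, hδpos, lt_of_le_of_lt (min_le_left _ _) (by linarith), ?_⟩
    have hδ1 : δ ≤ 1 := (min_le_right _ _).trans (min_le_left _ _)
    have hδε : δ ≤ ε / (Astar 1 + 1) := (min_le_right _ _).trans (min_le_right _ _)
    have h1 : Astar δ ≤ (δ / 1) * Astar 1 := hratio δ 1 hδpos.le hδ1 one_pos
    have h2 : (δ / 1) * Astar 1 = δ * Astar 1 := by ring
    have h3 : δ * Astar 1 ≤ (ε / (Astar 1 + 1)) * Astar 1 :=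
      mul_le_mul_of_nonneg_right hδε hA1
    have h4 : (ε / (Astar 1 + 1)) * Astar 1 < ε := by
      rw [div_mul_eq_mul_div, div_lt_iff₀ (by linarith)]
      nlinarith
    linarith
  -- partial families
  have hsub : ∀ (k : ℕ) (c : Fin k → ℝ) (j0 : Fin k), 1 ≤ k → (∀ j, 0 ≤ c j) →
      (∑ j, A (c j)) - A (c j0) ≤ Astar ((∑ j, c j) - c j0) := by
    intro k c j0 hk hc
    set c' := Function.update c j0 0 with hc'
    have hsum' : ∑ j, c' j = (∑ j, c j) - c j0 := by
      rw [hc', Finset.sum_update_of_mem (Finset.mem_univ j0),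
        Finset.sum_eq_sum_sdiff_singleton_add (Finset.mem_univ j0) c]
      ring
    have hb : 0 ≤ (∑ j, c j) - c j0 := by
      rw [← hsum']
      exact Finset.sum_nonneg fun j _ => by
        rw [hc']
        rcases eq_or_ne j j0 with rfl | h
        · simp
        · simp [Function.update_of_ne h]; exact hc j
    have hAsum' : ∑ j, A (c' j) = (∑ j, A (c j)) - A (c j0) := by
      have : (fun j => A (c' j)) = Function.update (fun j => A (c j)) j0 0 := by
        rw [hc']
        ext j
        rcases eq_or_ne j j0 with rfl | h
        · simp [hA0]
        · simp [Function.update_of_ne h]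
      rw [this, Finset.sum_update_of_mem (Finset.mem_univ j0),
        Finset.sum_eq_sum_sdiff_singleton_add (Finset.mem_univ j0) (fun j => A (c j))]
      ring
    have hmem : (∑ j, A (c j)) - A (c j0) ∈ S ((∑ j, c j) - c j0) := by
      refine ⟨k, c', hk, ?_, le_of_eq hsum', hAsum'.symm⟩
      intro j
      rw [hc']
      rcases eq_or_ne j j0 with rfl | h
      · simp
      · simp [Function.update_of_ne h]; exact hc j
    exact (hstar' _ hb).1 hmem
  -- Theorem 2.2 : Astar = A on [0,∞)
  have hAA : ∀ x, 0 ≤ x → Astar x = A x := by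
    intro x hx
    rcases eq_or_lt_of_le hx with rfl | hxpos
    · rw [hAstar0, hA0]
    refine le_antisymm ?_ (hA_le x hx)
    by_contra hlt
    push_neg at hlt
    have hgap : 0 < Astar x - A x := by
      have := hA_le x hx
      linarith
    obtain ⟨δ, hδpos, hδx, hδsmall⟩ := hsmall (Astar x - A x) x hgap hxpos
    set M := max ((Astar δ / δ) * x) (max (A x + Astar δ) (Astar δ + Astar (x - δ))) with hM
    have hub : Astar x ≤ M := by
      refine (hstar' x hx).2 ?_
      rintro s ⟨k, c, hk, hc, hsum, rfl⟩
      have hne : Nonempty (Fin k) := Fin.pos_iff_nonempty.mp hk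
      obtain ⟨j0, -, hmax⟩ := Finset.exists_max_image Finset.univ c Finset.univ_nonempty
      set a := c j0 with ha
      set b := (∑ j, c j) - a with hb
      have hb0 : 0 ≤ b := by
        have := hsub k c j0 hk hc
        -- b is a sum of nonneg: reprove directly
        have hsum' : b = ∑ j ∈ Finset.univ \ {j0}, c j := by
          rw [hb, ha, Finset.sum_eq_sum_sdiff_singleton_add (Finset.mem_univ j0) c]
          ring
        rw [hsum']
        exact Finset.sum_nonneg fun j _ => hc j
      have habx : a + b ≤ x := by simp only [hb]; linarith
      have ha0 : 0 ≤ a := hc j0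
      have hax : a ≤ x := by linarith
      have hkey : (∑ j, A (c j)) - A a ≤ Astar b := hsub k c j0 hk hc
      by_cases hcase1 : a ≤ δ
      · -- all terms small
        have hterm : ∀ j, A (c j) ≤ (Astar δ / δ) * c j := by
          intro j
          have hcj : c j ≤ δ := (hmax j (Finset.mem_univ j)).trans hcase1
          have h1 : A (c j) ≤ Astar (c j) := hA_le _ (hc j)
          have h2 : Astar (c j) ≤ (c j / δ) * Astar δ := hratio _ δ (hc j) hcj hδpos
          calc A (c j) ≤ (c j / δ) * Astar δ := h1.trans h2
            _ = (Astar δ / δ) * c j := by ring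
        have : ∑ j, A (c j) ≤ (Astar δ / δ) * x := by
          calc ∑ j, A (c j) ≤ ∑ j, (Astar δ / δ) * c j :=
                Finset.sum_le_sum fun j _ => hterm j
            _ = (Astar δ / δ) * ∑ j, c j := by rw [Finset.mul_sum]
            _ ≤ (Astar δ / δ) * x := by
                apply mul_le_mul_of_nonneg_left hsum
                exact div_nonneg (hAstar_nonneg δ hδpos.le) hδpos.le
        exact this.trans (le_max_left _ _)
      push_neg at hcase1
      by_cases hcase2 : b ≤ δ
      · have h1 : A a ≤ A x := hmono ha0 hx hax
        have h2 : Astar b ≤ Astar δ := hAstar_mono b δ hb0 hcase2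
        have : ∑ j, A (c j) ≤ A x + Astar δ := by linarith
        exact this.trans ((le_max_left _ _).trans (le_max_right _ _))
      push_neg at hcase2
      have h1 : A a ≤ Astar a := hA_le a ha0
      have h2 : Astar a + Astar b ≤ Astar δ + Astar (a + b - δ) :=
        hpair δ a b hδpos hcase1.le hcase2.le
      have h3 : Astar (a + b - δ) ≤ Astar (x - δ) := by
        apply hAstar_mono _ _ (by linarith) (by linarith)
      have : ∑ j, A (c j) ≤ Astar δ + Astar (x - δ) := by linarith
      exact this.trans ((le_max_right _ _).trans (le_max_right _ _))
    -- each component of M is < Astar x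
    have hc1 : (Astar δ / δ) * x < Astar x := by
      have h := hsratio δ x hδpos hδx
      rw [div_mul_eq_mul_div, div_lt_iff₀ hδpos]
      have h2 := mul_lt_mul_of_pos_right h hxpos
      have h3 : δ / x * Astar x * x = δ * Astar x := by field_simp
      linarith
    have hc2 : A x + Astar δ < Astar x := by linarith
    have hc3 : Astar δ + Astar (x - δ) < Astar x := hssup δ x hδpos hδx
    have : M < Astar x := max_lt hc1 (max_lt hc2 hc3)
    linarith
  -- the ratio function
  set r : ℝ → ℝ := fun t => A t / t with hr
  have hrmono : MonotoneOn r (Set.Ioi 0) := by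
    intro s hs t ht hst
    simp only [Set.mem_Ioi] at hs ht
    have h1 : Astar s ≤ (s / t) * Astar t := hratio s t hs.le hst ht
    rw [hAA s hs.le, hAA t ht.le] at h1
    rw [hr]
    rw [div_le_div_iff₀ hs ht]
    rw [div_mul_eq_mul_div, le_div_iff₀ ht] at h1
    linarith
  have hrnonneg : ∀ t > 0, 0 ≤ r t := fun t ht =>
    div_nonneg (hAnonneg t ht.le) ht.le
  have hbdd : BddBelow (r '' Set.Ioi 0) := by
    refine ⟨0, ?_⟩
    rintro y ⟨t, ht, rfl⟩
    exact hrnonneg t ht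
  set c := sInf (r '' Set.Ioi 0) with hc
  have htendsto : Filter.Tendsto r (nhdsWithin 0 (Set.Ioi 0)) (nhds c) :=
    MonotoneOn.tendsto_nhdsGT hrmono hbdd
  have hcnonneg : 0 ≤ c := by
    apply le_csInf ((Set.Nonempty.image r ⟨1, by norm_num⟩))
    rintro y ⟨t, ht, rfl⟩
    exact hrnonneg t ht
  have hcle : ∀ t, 0 ≤ t → c * t ≤ A t := by
    intro t ht
    rcases eq_or_lt_of_le ht with rfl | htpos
    · simp [hA0]
    have h1 : c ≤ r t := csInf_le hbdd ⟨t, htpos, rfl⟩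
    rw [hr] at h1
    rw [le_div_iff₀ htpos] at h1
    linarith
  refine ⟨c, htendsto, ?_⟩
  intro x hx
  constructor
  · rintro s ⟨k, d, hk, hd, hsum, rfl⟩
    calc c * x ≤ c * ∑ i, d i := mul_le_mul_of_nonneg_left hsum hcnonneg
      _ = ∑ i, c * d i := by rw [Finset.mul_sum]
      _ ≤ ∑ i, A (d i) := Finset.sum_le_sum fun i _ => hcle (d i) (hd i)
  · intro m hm
    rcases eq_or_lt_of_le hx with rfl | hxpos
    · have h0 : (0 : ℝ) ∈ {s : ℝ | ∃ (k : ℕ) (d : Fin k → ℝ), 1 ≤ k ∧ (∀ i, 0 ≤ d i) ∧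
          (0:ℝ) ≤ (∑ i, d i) ∧ s = ∑ i, A (d i)} :=
        ⟨1, fun _ => 0, le_rfl, fun _ => le_rfl, by simp, by simp [hA0]⟩
      have := hm h0
      simpa using this
    have hkey : ∀ n : ℕ, 1 ≤ n → m ≤ x * r (x / n) := by
      intro n hn
      have hnpos : (0 : ℝ) < n := by exact_mod_cast hn
      have hmem : (n : ℝ) * A (x / n) ∈ {s : ℝ | ∃ (k : ℕ) (d : Fin k → ℝ), 1 ≤ k ∧
          (∀ i, 0 ≤ d i) ∧ x ≤ (∑ i, d i) ∧ s = ∑ i, A (d i)} := by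
        refine ⟨n, fun _ => x / n, hn, fun _ => div_nonneg hx (by positivity), ?_, ?_⟩
        · rw [Finset.sum_const, Finset.card_univ, Fintype.card_fin]
          rw [nsmul_eq_mul, mul_div_cancel₀ _ (ne_of_gt hnpos)]
        · rw [Finset.sum_const, Finset.card_univ, Fintype.card_fin, nsmul_eq_mul]
      have h1 : m ≤ (n : ℝ) * A (x / n) := hm hmem
      have h2 : x * r (x / n) = (n : ℝ) * A (x / n) := by
        rw [hr]
        have hxn : x / n ≠ 0 := by positivity
        field_simp
      linarith
    have hseq : Filter.Tendsto (fun n : ℕ => x / n) Filter.atTop (nhdsWithin 0 (Set.Ioi 0)) := by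
      rw [tendsto_nhdsWithin_iff]
      constructor
      · exact tendsto_const_div_atTop_nhds_zero_nat x
      · filter_upwards [Filter.eventually_ge_atTop 1] with n hn
        have hnpos : (0 : ℝ) < n := by exact_mod_cast hn
        exact div_pos hxpos hnpos
    have hlim : Filter.Tendsto (fun n : ℕ => x * r (x / n)) Filter.atTop (nhds (x * c)) :=
      (htendsto.comp hseq).const_mul x
    have : m ≤ x * c := ge_of_tendsto hlim (by
      filter_upwards [Filter.eventually_ge_atTop 1] with n hn
      exact hkey n hn)
    linarith [this]
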